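/- Let H be a weak bialgebra and A a right H-comodule algebra. The element ε̃ ∈ Hom(H,A) defined by ε̃(h) = 1₍[0]₎ ε(h 1₍[1]₎) is a two-sided unit for the convolution-type product (f # g)(h) = f(h₍₂₎)₍[0]₎ g(h₍₁₎ f(h₍₂₎)₍[1]₎) on Hom̲(H,A) = {f : H → A | f(h) = 1₍[0]₎ f(h1₍[1]₎)}. -/

import Mathlib

open TensorProduct LinearMap

/-- A weak bialgebra over a commutative ring `k`: a `k`-algebra with a
coalgebra structure whose comultiplication is multiplicative, the
compatibility of the counit with multiplication and of the unit with
comultiplication being weakened to the weak bialgebra axioms. -/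
structure WeakBialgebra (k H : Type) [CommRing k] [Ring H] [Algebra k H] where
  comul : H →ₗ[k] H ⊗[k] H
  counit : H →ₗ[k] k
  coassoc : ∀ h, (TensorProduct.assoc k H H H) ((rTensor H comul) (comul h)) =
    (lTensor H comul) (comul h)
  counit_comul : ∀ h, (TensorProduct.lid k H) ((rTensor H counit) (comul h)) = h
  comul_counit : ∀ h, (TensorProduct.rid k H) ((lTensor H counit) (comul h)) = h
  comul_mul : ∀ g h : H, comul (g * h) = comul g * comul h
  /-- `Δ²(1) = (Δ(1)⊗1)(1⊗Δ(1))` -/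
  weak_unit_l : rTensor H comul (comul 1) =
    (comul 1 ⊗ₜ[k] (1 : H)) *
      ((TensorProduct.assoc k H H H).symm ((1 : H) ⊗ₜ[k] comul 1))
  /-- `Δ²(1) = (1⊗Δ(1))(Δ(1)⊗1)` -/
  weak_unit_r : rTensor H comul (comul 1) =
    ((TensorProduct.assoc k H H H).symm ((1 : H) ⊗ₜ[k] comul 1)) *
      (comul 1 ⊗ₜ[k] (1 : H))
  /-- `ε(ghl) = ε(g h₍₁₎) ε(h₍₂₎ l)` -/
  weak_counit_l : ∀ g h l : H, counit (g * h * l) =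
    (LinearMap.mul' k k) ((TensorProduct.map (counit ∘ₗ mulLeft k g)
      (counit ∘ₗ mulRight k l)) (comul h))
  /-- `ε(ghl) = ε(g h₍₂₎) ε(h₍₁₎ l)` -/
  weak_counit_r : ∀ g h l : H, counit (g * h * l) =
    (LinearMap.mul' k k) ((TensorProduct.map (counit ∘ₗ mulRight k l)
      (counit ∘ₗ mulLeft k g)) (comul h))

/-- A right `H`-comodule algebra over a weak bialgebra `H`. -/
structure ComoduleAlgebra (k H A : Type) [CommRing k] [Ring H] [Algebra k H]
    [Ring A] [Algebra k A] (W : WeakBialgebra k H) where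
  rho : A →ₗ[k] A ⊗[k] H
  coassoc : ∀ a, (TensorProduct.assoc k A H H) ((rTensor H rho) (rho a)) =
    (lTensor A W.comul) (rho a)
  counit : ∀ a, (TensorProduct.rid k A) ((lTensor A W.counit) (rho a)) = a
  rho_mul : ∀ a b : A, rho (a * b) = rho a * rho b
  /-- `ρ²(1) = 1₍[0]₎ ⊗ 1₍[1]₎1₍₁₎ ⊗ 1₍₂₎` -/
  weak : rTensor H rho (rho 1) =
    ((rho 1) ⊗ₜ[k] (1 : H)) *
      ((TensorProduct.assoc k A H H).symm ((1 : A) ⊗ₜ[k] W.comul 1))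

variable (k H A : Type) [CommRing k] [Ring H] [Algebra k H] [Ring A] [Algebra k A]
variable (W : WeakBialgebra k H) (R : ComoduleAlgebra k H A W)

/-- `h ↦ 1 ⊗ h`. -/
noncomputable def iH : H →ₗ[k] A ⊗[k] H := TensorProduct.mk k A H 1

/-- The condition defining `Hom̲(H,A) ⊆ Hom(H,A)`:
`f(h) = 1₍[0]₎ f(h 1₍[1]₎)` for all `h`. -/
noncomputable def homCond (f : H →ₗ[k] A) : Prop :=
  ∀ h : H, f h = LinearMap.mul' k A
    ((TensorProduct.map LinearMap.id f) ((iH k H A h) * R.rho 1))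

/-- The product `(f # g)(h) = f(h₍₂₎)₍[0]₎ g(h₍₁₎ f(h₍₂₎)₍[1]₎)`. -/
noncomputable def prodH (f g : H →ₗ[k] A) : H →ₗ[k] A :=
  (TensorProduct.lift (LinearMap.mk₂ k
    (fun h₁ h₂ => LinearMap.mul' k A
      ((TensorProduct.map LinearMap.id g) ((iH k H A h₁) * R.rho (f h₂))))
    (by intro a b c; simp [map_add, add_mul])
    (by intro t a c; simp [map_smul, smul_mul_assoc])
    (by intro a b c; simp [map_add, mul_add])
    (by intro t a c; simp [map_smul, mul_smul_comm]))) ∘ₗ W.comul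

/-- The element `ε̃(h) = 1₍[0]₎ ε(h 1₍[1]₎)` of `Hom(H,A)`. -/
noncomputable def epsTilde : H →ₗ[k] A :=
  (TensorProduct.rid k A).toLinearMap ∘ₗ (lTensor A W.counit) ∘ₗ
    (mulRight k (R.rho 1)) ∘ₗ iH k H A

section Aux

set_option synthInstance.maxHeartbeats 1000000
set_option maxHeartbeats 1000000
set_option maxRecDepth 10000

/-- `(id ⊗ ε) : A⊗H → A`. -/
noncomputable def JA : A ⊗[k] H →ₗ[k] A :=
  (TensorProduct.rid k A).toLinearMap ∘ₗ lTensor A W.counit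

@[simp] lemma JA_tmul (a : A) (x : H) : JA k H A W (a ⊗ₜ[k] x) = W.counit x • a := by
  simp [JA]

lemma JA_rho (a : A) : JA k H A W (R.rho a) = a := R.counit a

/-- `(id ⊗ ε) : H⊗H → H`. -/
noncomputable def JH : H ⊗[k] H →ₗ[k] H :=
  (TensorProduct.rid k H).toLinearMap ∘ₗ lTensor H W.counit

@[simp] lemma JH_tmul (x y : H) : JH k H W (x ⊗ₜ[k] y) = W.counit y • x := by
  simp [JH]

lemma JH_comul (x : H) : JH k H W (W.comul x) = x := W.comul_counit x

/-- `(ε ⊗ id) : H⊗H → H`. -/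
noncomputable def KH : H ⊗[k] H →ₗ[k] H :=
  (TensorProduct.lid k H).toLinearMap ∘ₗ rTensor H W.counit

@[simp] lemma KH_tmul (x y : H) : KH k H W (x ⊗ₜ[k] y) = W.counit x • y := by
  simp [KH]

lemma KH_comul (x : H) : KH k H W (W.comul x) = x := W.counit_comul x

/-- `x ↦ x ⊗ 1`. -/
noncomputable def rtH : H →ₗ[k] H ⊗[k] H := (TensorProduct.mk k H H).flip 1

@[simp] lemma rtH_apply (x : H) : rtH k H x = x ⊗ₜ[k] (1 : H) := rfl

/-- The target map `ε_t(x) = ε(1₍₁₎x)1₍₂₎`. -/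
noncomputable def etA : H →ₗ[k] H :=
  KH k H W ∘ₗ mulLeft k (W.comul 1) ∘ₗ rtH k H

lemma etA_apply (x : H) : etA k H W x = KH k H W (W.comul 1 * (x ⊗ₜ[k] (1:H))) := rfl

/-- The map `π(x) = ε(x1₍₁₎)1₍₂₎`. -/
noncomputable def piA : H →ₗ[k] H :=
  KH k H W ∘ₗ mulRight k (W.comul 1) ∘ₗ rtH k H

lemma piA_apply (x : H) : piA k H W x = KH k H W ((x ⊗ₜ[k] (1:H)) * W.comul 1) := rfl

lemma r1_mul : R.rho 1 * R.rho 1 = R.rho 1 := by rw [← R.rho_mul, one_mul]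

lemma rho_eq_r1_mul (a : A) : R.rho a = R.rho 1 * R.rho a := by rw [← R.rho_mul, one_mul]

lemma rho_eq_mul_r1 (a : A) : R.rho a = R.rho a * R.rho 1 := by rw [← R.rho_mul, mul_one]

lemma JA_mulrho (c a : A) : JA k H A W (R.rho c * R.rho a) = c * a := by
  rw [← R.rho_mul, JA_rho]

lemma assoA_mul (x y : (A ⊗[k] H) ⊗[k] H) :
    TensorProduct.assoc k A H H (x * y) =
      TensorProduct.assoc k A H H x * TensorProduct.assoc k A H H y :=
  map_mul (Algebra.TensorProduct.assoc k k k A H H) x y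

lemma assoH_mul (x y : (H ⊗[k] H) ⊗[k] H) :
    TensorProduct.assoc k H H H (x * y) =
      TensorProduct.assoc k H H H x * TensorProduct.assoc k H H H y :=
  map_mul (Algebra.TensorProduct.assoc k k k H H H) x y

lemma eps_apply (y : H) :
    epsTilde k H A W R y = JA k H A W (((1:A) ⊗ₜ[k] y) * R.rho 1) := rfl

lemma JA_tmul_mul (a : A) (y : H) (t : A ⊗[k] H) :
    JA k H A W ((a ⊗ₜ[k] y) * t) = a * JA k H A W (((1:A) ⊗ₜ[k] y) * t) := by
  induction t using TensorProduct.induction_on with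
  | zero => simp
  | tmul c z =>
      simp [Algebra.TensorProduct.tmul_mul_tmul, mul_smul_comm, mul_assoc]
  | add u v hu hv => simp [mul_add, hu, hv]

lemma mu_map_eps (x : A ⊗[k] H) :
    LinearMap.mul' k A ((TensorProduct.map LinearMap.id (epsTilde k H A W R)) x) =
      JA k H A W (x * R.rho 1) := by
  induction x using TensorProduct.induction_on with
  | zero => simp
  | tmul a y =>
      rw [TensorProduct.map_tmul, LinearMap.mul'_apply, LinearMap.id_coe, id_eq,
        eps_apply, ← JA_tmul_mul]
  | add u v hu hv => simp [add_mul, hu, hv]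

lemma homCond_eps : homCond k H A W R (epsTilde k H A W R) := by
  intro h
  rw [mu_map_eps]
  show epsTilde k H A W R h = JA k H A W (((1:A) ⊗ₜ[k] h) * R.rho 1 * R.rho 1)
  rw [mul_assoc, r1_mul, eps_apply]

/-- The bilinear lift underlying `prodH`. -/
noncomputable def conv (f g : H →ₗ[k] A) : H ⊗[k] H →ₗ[k] A :=
  TensorProduct.lift (LinearMap.mk₂ k
    (fun h₁ h₂ => LinearMap.mul' k A
      ((TensorProduct.map LinearMap.id g) ((iH k H A h₁) * R.rho (f h₂))))
    (by intro a b c; simp [map_add, add_mul])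
    (by intro t a c; simp [map_smul, smul_mul_assoc])
    (by intro a b c; simp [map_add, mul_add])
    (by intro t a c; simp [map_smul, mul_smul_comm]))

lemma prodH_eq (f g : H →ₗ[k] A) (h : H) :
    prodH k H A W R f g h = conv k H A W R f g (W.comul h) := rfl

lemma conv_tmul (f g : H →ₗ[k] A) (x y : H) :
    conv k H A W R f g (x ⊗ₜ[k] y) =
      LinearMap.mul' k A ((TensorProduct.map LinearMap.id g)
        (((1:A) ⊗ₜ[k] x) * R.rho (f y))) := rfl

lemma rho_JA_contract (y : H) (t : A ⊗[k] H) :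
    R.rho (JA k H A W (((1:A) ⊗ₜ[k] y) * t)) =
      (TensorProduct.rid k (A ⊗[k] H)).toLinearMap
        ((lTensor (A ⊗[k] H) (W.counit ∘ₗ mulLeft k y)) (rTensor H R.rho t)) := by
  induction t using TensorProduct.induction_on with
  | zero => simp only [mul_zero, map_zero]
  | tmul c z =>
      simp only [Algebra.TensorProduct.tmul_mul_tmul, one_mul, LinearMap.rTensor_tmul,
        LinearMap.lTensor_tmul, LinearMap.comp_apply, LinearMap.mulLeft_apply,
        LinearEquiv.coe_toLinearMap, TensorProduct.rid_tmul, JA_tmul, map_smul]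
  | add u v hu hv => simp only [mul_add, map_add, hu, hv]

lemma X_eq :
    (TensorProduct.assoc k A H H).symm (lTensor A W.comul (R.rho 1)) =
      rTensor H R.rho (R.rho 1) := by
  rw [← R.coassoc 1, LinearEquiv.symm_apply_apply]

lemma p2sub (x y : H) (s : A ⊗[k] (H ⊗[k] H)) :
    ((1:A) ⊗ₜ[k] x) *
      ((TensorProduct.rid k (A ⊗[k] H)).toLinearMap
        ((lTensor (A ⊗[k] H) (W.counit ∘ₗ mulLeft k y))
          ((TensorProduct.assoc k A H H).symm s))) =
      lTensor A (JH k H W) (((1:A) ⊗ₜ[k] (x ⊗ₜ[k] y)) * s) := by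
  induction s using TensorProduct.induction_on with
  | zero => simp only [map_zero, mul_zero]
  | tmul a w =>
      induction w using TensorProduct.induction_on with
      | zero => simp only [TensorProduct.tmul_zero, map_zero, mul_zero]
      | tmul p q =>
          simp only [TensorProduct.assoc_symm_tmul, LinearMap.lTensor_tmul,
            LinearMap.comp_apply, LinearMap.mulLeft_apply, LinearEquiv.coe_toLinearMap,
            TensorProduct.rid_tmul, Algebra.TensorProduct.tmul_mul_tmul, one_mul,
            JH_tmul, TensorProduct.tmul_smul, mul_smul_comm]
      | add u v hu hv =>
          simp only [TensorProduct.tmul_add, map_add, mul_add] at hu hv ⊢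
          rw [hu, hv]
  | add u v hu hv =>
      simp only [map_add, mul_add] at hu hv ⊢
      rw [hu, hv]

lemma tmul_comul_mul (z : H ⊗[k] H) (t : A ⊗[k] H) :
    ((1:A) ⊗ₜ[k] z) * lTensor A W.comul t =
      lTensor A (mulLeft k z ∘ₗ W.comul) t := by
  induction t using TensorProduct.induction_on with
  | zero => simp
  | tmul a yy => simp [Algebra.TensorProduct.tmul_mul_tmul]
  | add u v hu hv => simp [mul_add, hu, hv]

lemma lTensor_mulLeft (x : H) (t : A ⊗[k] H) :
    lTensor A (mulLeft k x) t = ((1:A) ⊗ₜ[k] x) * t := by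
  induction t using TensorProduct.induction_on with
  | zero => simp
  | tmul a yy => simp [Algebra.TensorProduct.tmul_mul_tmul]
  | add u v hu hv => simp [mul_add, hu, hv]

lemma JH_mulLeft_comul (h : H) :
    JH k H W ∘ₗ (mulLeft k (W.comul h) ∘ₗ W.comul) = mulLeft k h := by
  ext y
  simp only [LinearMap.comp_apply, LinearMap.mulLeft_apply, ← W.comul_mul]
  exact JH_comul k H W (h * y)

lemma part2_key (f : H →ₗ[k] A) (z : H ⊗[k] H) :
    conv k H A W R (epsTilde k H A W R) f z =
      LinearMap.mul' k A ((TensorProduct.map LinearMap.id f)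
        (lTensor A (JH k H W) (((1:A) ⊗ₜ[k] z) * lTensor A W.comul (R.rho 1)))) := by
  induction z using TensorProduct.induction_on with
  | zero => simp
  | tmul x y =>
      rw [conv_tmul]
      show LinearMap.mul' k A ((TensorProduct.map LinearMap.id f)
        (((1:A) ⊗ₜ[k] x) * R.rho (epsTilde k H A W R y))) = _
      rw [eps_apply, rho_JA_contract, ← X_eq, p2sub]
  | add u v hu hv =>
      simp only [map_add, TensorProduct.tmul_add, add_mul] at hu hv ⊢
      rw [hu, hv]

lemma part2 (f : H →ₗ[k] A) (hf : homCond k H A W R f) :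
    prodH k H A W R (epsTilde k H A W R) f = f := by
  ext h
  rw [prodH_eq, part2_key, tmul_comul_mul, ← LinearMap.lTensor_comp_apply,
    JH_mulLeft_comul, lTensor_mulLeft]
  exact (hf h).symm

lemma comul_mul_d1 (h : H) : W.comul h * W.comul 1 = W.comul h := by
  rw [← W.comul_mul, mul_one]

lemma KH_mulLeft_comul (h : H) :
    KH k H W ∘ₗ (mulLeft k (W.comul h) ∘ₗ W.comul) = mulLeft k h := by
  ext y
  simp only [LinearMap.comp_apply, LinearMap.mulLeft_apply, ← W.comul_mul]
  exact KH_comul k H W (h * y)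

lemma d1aux (t : A ⊗[k] H) (w : H ⊗[k] H) :
    rTensor H (JA k H A W) ((t ⊗ₜ[k] (1:H)) *
        (TensorProduct.assoc k A H H).symm ((1:A) ⊗ₜ[k] w)) =
      lTensor A (KH k H W ∘ₗ (mulRight k w ∘ₗ rtH k H)) t := by
  induction t using TensorProduct.induction_on with
  | zero => simp only [TensorProduct.zero_tmul, zero_mul, map_zero]
  | tmul a x =>
      induction w using TensorProduct.induction_on with
      | zero =>
          simp only [TensorProduct.tmul_zero, map_zero, mul_zero,
            LinearMap.lTensor_tmul, LinearMap.comp_apply, LinearMap.mulRight_apply,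
            rtH_apply]
      | tmul u v =>
          simp only [TensorProduct.assoc_symm_tmul, Algebra.TensorProduct.tmul_mul_tmul,
            one_mul, mul_one, LinearMap.rTensor_tmul, JA_tmul, LinearMap.lTensor_tmul,
            LinearMap.comp_apply, LinearMap.mulRight_apply, rtH_apply, KH_tmul,
            TensorProduct.smul_tmul', TensorProduct.tmul_smul]
      | add u v hu hv =>
          simp only [TensorProduct.tmul_add, map_add, mul_add] at hu hv ⊢
          rw [hu, hv]
          simp only [LinearMap.lTensor_tmul, LinearMap.comp_apply,
            LinearMap.mulRight_apply, rtH_apply, mul_add, map_add,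
            TensorProduct.tmul_add]
  | add u v hu hv =>
      simp only [TensorProduct.add_tmul, add_mul, map_add] at hu hv ⊢
      rw [hu, hv]

lemma D1 : lTensor A (piA k H W) (R.rho 1) = R.rho 1 := by
  have hid : rTensor H (JA k H A W) (rTensor H R.rho (R.rho 1)) = R.rho 1 := by
    rw [← LinearMap.rTensor_comp_apply]
    have h2 : JA k H A W ∘ₗ R.rho = LinearMap.id := by
      ext a
      simp only [LinearMap.comp_apply, LinearMap.id_apply]
      exact JA_rho k H A W R a
    rw [h2, LinearMap.rTensor_id, LinearMap.id_apply]
  rw [R.weak, d1aux] at hid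
  exact hid

lemma asso_tmul_one (t : A ⊗[k] H) :
    TensorProduct.assoc k A H H (t ⊗ₜ[k] (1:H)) = lTensor A (rtH k H) t := by
  induction t using TensorProduct.induction_on with
  | zero => simp only [TensorProduct.zero_tmul, map_zero]
  | tmul a x => simp only [TensorProduct.assoc_tmul, LinearMap.lTensor_tmul, rtH_apply]
  | add u v hu hv => simp only [TensorProduct.add_tmul, map_add, hu, hv]

lemma elem_pi (t : A ⊗[k] H) :
    lTensor A (piA k H W) t =
      lTensor A (KH k H W) ((lTensor A (rtH k H) t) * ((1:A) ⊗ₜ[k] W.comul 1)) := by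
  induction t using TensorProduct.induction_on with
  | zero => simp only [map_zero, zero_mul]
  | tmul a y =>
      have key : ∀ w' : H ⊗[k] H, a ⊗ₜ[k] (KH k H W ((y ⊗ₜ[k] (1:H)) * w')) =
          lTensor A (KH k H W) ((a ⊗ₜ[k] (y ⊗ₜ[k] (1:H))) * ((1:A) ⊗ₜ[k] w')) := by
        intro w'
        induction w' using TensorProduct.induction_on with
        | zero => simp only [mul_zero, map_zero, TensorProduct.tmul_zero]
        | tmul p q =>
            simp only [Algebra.TensorProduct.tmul_mul_tmul, one_mul, mul_one,
              LinearMap.lTensor_tmul, KH_tmul, TensorProduct.tmul_smul]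
        | add u v hu hv =>
            simp only [mul_add, map_add, TensorProduct.tmul_add, hu, hv]
      simp only [LinearMap.lTensor_tmul, piA_apply, rtH_apply]
      exact key (W.comul 1)
  | add u v hu hv => simp only [map_add, add_mul, hu, hv]

lemma elem_et (t : A ⊗[k] H) :
    lTensor A (etA k H W) t =
      lTensor A (KH k H W) (((1:A) ⊗ₜ[k] W.comul 1) * (lTensor A (rtH k H) t)) := by
  induction t using TensorProduct.induction_on with
  | zero => simp only [map_zero, mul_zero]
  | tmul a y =>
      have key : ∀ w' : H ⊗[k] H, a ⊗ₜ[k] (KH k H W (w' * (y ⊗ₜ[k] (1:H)))) =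
          lTensor A (KH k H W) (((1:A) ⊗ₜ[k] w') * (a ⊗ₜ[k] (y ⊗ₜ[k] (1:H)))) := by
        intro w'
        induction w' using TensorProduct.induction_on with
        | zero => simp only [zero_mul, map_zero, TensorProduct.tmul_zero,
            TensorProduct.zero_tmul]
        | tmul p q =>
            simp only [Algebra.TensorProduct.tmul_mul_tmul, one_mul, mul_one,
              LinearMap.lTensor_tmul, KH_tmul, TensorProduct.tmul_smul]
        | add u v hu hv =>
            simp only [add_mul, map_add, TensorProduct.tmul_add,
              TensorProduct.add_tmul, hu, hv]
      simp only [LinearMap.lTensor_tmul, etA_apply, rtH_apply]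
      exact key (W.comul 1)
  | add u v hu hv => simp only [map_add, mul_add, hu, hv]

/-- Contraction `(a⊗y)⊗(p⊗Q) ↦ ε(yp)•(a⊗Q)`. -/
noncomputable def Phi : (A ⊗[k] H) ⊗[k] (H ⊗[k] (H ⊗[k] H)) →ₗ[k] A ⊗[k] (H ⊗[k] H) :=
  rTensor (H ⊗[k] H) (JA k H A W ∘ₗ lTensor A (LinearMap.mul' k H) ∘ₗ
      (TensorProduct.assoc k A H H).toLinearMap) ∘ₗ
    (TensorProduct.assoc k (A ⊗[k] H) H (H ⊗[k] H)).symm.toLinearMap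

@[simp] lemma Phi_tmul (a : A) (y p : H) (Q : H ⊗[k] H) :
    Phi k H A W ((a ⊗ₜ[k] y) ⊗ₜ[k] (p ⊗ₜ[k] Q)) = (W.counit (y * p) • a) ⊗ₜ[k] Q := by
  simp [Phi, TensorProduct.smul_tmul']

lemma f3A (t : A ⊗[k] H) (w w' : H ⊗[k] H) :
    (lTensor A (rtH k H) (lTensor A (KH k H W)
        ((lTensor A (rtH k H) t) * ((1:A) ⊗ₜ[k] w')))) * ((1:A) ⊗ₜ[k] w) =
      Phi k H A W (t ⊗ₜ[k] (TensorProduct.assoc k H H H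
          ((w' ⊗ₜ[k] (1:H)) * ((TensorProduct.assoc k H H H).symm ((1:H) ⊗ₜ[k] w))))) := by
  induction t using TensorProduct.induction_on with
  | zero => simp only [TensorProduct.tmul_zero, TensorProduct.zero_tmul, mul_zero, zero_mul, map_zero]
  | tmul a y =>
      induction w' using TensorProduct.induction_on with
      | zero => simp only [TensorProduct.tmul_zero, TensorProduct.zero_tmul, mul_zero, zero_mul, map_zero]
      | tmul p q =>
          induction w using TensorProduct.induction_on with
          | zero => simp only [TensorProduct.tmul_zero, TensorProduct.zero_tmul, mul_zero, zero_mul, map_zero]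
          | tmul u v =>
              simp only [LinearMap.lTensor_tmul, rtH_apply,
                Algebra.TensorProduct.tmul_mul_tmul, one_mul, mul_one, KH_tmul,
                TensorProduct.tmul_smul, map_smul, smul_mul_assoc,
                TensorProduct.assoc_symm_tmul, TensorProduct.assoc_tmul, Phi_tmul,
                TensorProduct.smul_tmul']
          | add u v hu hv =>
              simp only [TensorProduct.tmul_add, map_add, mul_add, hu, hv]
      | add u v hu hv =>
          simp only [TensorProduct.tmul_add, TensorProduct.add_tmul, map_add,
            mul_add, add_mul, hu, hv]
  | add u v hu hv =>
      simp only [map_add, add_mul, TensorProduct.add_tmul, hu, hv]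

lemma f3C (t : A ⊗[k] H) (w w' : H ⊗[k] H) :
    Phi k H A W (t ⊗ₜ[k] (TensorProduct.assoc k H H H
          (((TensorProduct.assoc k H H H).symm ((1:H) ⊗ₜ[k] w)) * (w' ⊗ₜ[k] (1:H))))) =
      ((1:A) ⊗ₜ[k] w) * (lTensor A (rtH k H) (lTensor A (KH k H W)
        ((lTensor A (rtH k H) t) * ((1:A) ⊗ₜ[k] w')))) := by
  induction t using TensorProduct.induction_on with
  | zero => simp only [TensorProduct.tmul_zero, TensorProduct.zero_tmul, mul_zero, zero_mul, map_zero]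
  | tmul a y =>
      induction w' using TensorProduct.induction_on with
      | zero => simp only [TensorProduct.tmul_zero, TensorProduct.zero_tmul, mul_zero, zero_mul, map_zero]
      | tmul p q =>
          induction w using TensorProduct.induction_on with
          | zero => simp only [TensorProduct.tmul_zero, TensorProduct.zero_tmul, mul_zero, zero_mul, map_zero]
          | tmul u v =>
              simp only [LinearMap.lTensor_tmul, rtH_apply,
                Algebra.TensorProduct.tmul_mul_tmul, one_mul, mul_one, KH_tmul,
                TensorProduct.tmul_smul, map_smul, smul_mul_assoc,
                TensorProduct.assoc_symm_tmul, TensorProduct.assoc_tmul, Phi_tmul,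
                TensorProduct.smul_tmul']
          | add u v hu hv =>
              simp only [TensorProduct.tmul_add, map_add, mul_add, add_mul, hu, hv]
      | add u v hu hv =>
          simp only [TensorProduct.tmul_add, TensorProduct.add_tmul, map_add,
            mul_add, add_mul, hu, hv]
  | add u v hu hv =>
      simp only [map_add, add_mul, mul_add, TensorProduct.add_tmul, hu, hv]

lemma F3' : TensorProduct.assoc k A H H (rTensor H R.rho (R.rho 1)) =
    ((1:A) ⊗ₜ[k] W.comul 1) * (lTensor A (rtH k H) (R.rho 1)) := by
  have h0 : TensorProduct.assoc k A H H (rTensor H R.rho (R.rho 1)) =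
      (lTensor A (rtH k H) (R.rho 1)) * ((1:A) ⊗ₜ[k] W.comul 1) := by
    rw [R.weak, assoA_mul, LinearEquiv.apply_symm_apply, asso_tmul_one]
  rw [h0]
  conv_lhs => rw [← D1 k H A W R, elem_pi, f3A, ← W.weak_unit_l, W.weak_unit_r, f3C,
    ← elem_pi, D1 k H A W R]

lemma d2a0 (u : A ⊗[k] H) (y : H) :
    lTensor A (KH k H W) (TensorProduct.assoc k A H H (u ⊗ₜ[k] y)) =
      (JA k H A W u) ⊗ₜ[k] y := by
  induction u using TensorProduct.induction_on with
  | zero => simp only [TensorProduct.zero_tmul, map_zero]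
  | tmul b m =>
      simp only [TensorProduct.assoc_tmul, LinearMap.lTensor_tmul, KH_tmul, JA_tmul,
        TensorProduct.tmul_smul, TensorProduct.smul_tmul']
  | add u v hu hv =>
      simp only [TensorProduct.add_tmul, map_add, hu, hv]

lemma d2a (t : A ⊗[k] H) :
    lTensor A (KH k H W) (TensorProduct.assoc k A H H (rTensor H R.rho t)) = t := by
  induction t using TensorProduct.induction_on with
  | zero => simp only [map_zero]
  | tmul b y =>
      rw [LinearMap.rTensor_tmul, d2a0, JA_rho]
  | add u v hu hv => simp only [map_add, hu, hv]

lemma D2 : lTensor A (etA k H W) (R.rho 1) = R.rho 1 := by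
  have h := d2a k H A W R (R.rho 1)
  rw [F3', ← elem_et] at h
  exact h

lemma lemI (h : H) :
    lTensor A (KH k H W) (((1:A) ⊗ₜ[k] W.comul h) * lTensor A (rtH k H) (R.rho 1)) =
      ((1:A) ⊗ₜ[k] h) * R.rho 1 := by
  have hh : ((1:A) ⊗ₜ[k] W.comul h) * ((1:A) ⊗ₜ[k] W.comul 1) =
      (1:A) ⊗ₜ[k] W.comul h := by
    rw [Algebra.TensorProduct.tmul_mul_tmul, one_mul, comul_mul_d1]
  have e1 : ((1:A) ⊗ₜ[k] W.comul h) * lTensor A (rtH k H) (R.rho 1) =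
      ((1:A) ⊗ₜ[k] W.comul h) * lTensor A W.comul (R.rho 1) := by
    conv_lhs => rw [← hh, mul_assoc, ← F3' k H A W R, R.coassoc 1]
  rw [e1, tmul_comul_mul, ← LinearMap.lTensor_comp_apply, KH_mulLeft_comul,
    lTensor_mulLeft]

lemma g3 (u z : H) (s : H ⊗[k] H) :
    W.counit (u * (TensorProduct.lid k H) (rTensor H (W.counit ∘ₗ mulRight k z) s)) =
      LinearMap.mul' k k ((TensorProduct.map (W.counit ∘ₗ mulRight k z)
        (W.counit ∘ₗ mulLeft k u)) s) := by
  induction s using TensorProduct.induction_on with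
  | zero => simp only [map_zero, mul_zero]
  | tmul y₁ y₂ =>
      simp only [LinearMap.rTensor_tmul, LinearMap.comp_apply, LinearMap.mulRight_apply,
        LinearMap.mulLeft_apply, TensorProduct.lid_tmul, TensorProduct.map_tmul,
        LinearMap.mul'_apply, mul_smul_comm, map_smul, smul_eq_mul]
  | add u' v' hu hv => simp only [map_add, mul_add, hu, hv]

lemma g2 (u y z : H) :
    W.counit (u * (y * z)) =
      W.counit (u * (TensorProduct.lid k H)
        (rTensor H (W.counit ∘ₗ mulRight k z) (W.comul y))) := by
  rw [g3, ← W.weak_counit_r u y z, mul_assoc]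

lemma g0 (m₁ m₂ : H) (hm : ∀ u, W.counit (u * m₁) = W.counit (u * m₂)) :
    etA k H W m₁ = etA k H W m₂ := by
  have key : ∀ w : H ⊗[k] H, KH k H W (w * (m₁ ⊗ₜ[k] (1:H))) =
      KH k H W (w * (m₂ ⊗ₜ[k] (1:H))) := by
    intro w
    induction w using TensorProduct.induction_on with
    | zero => simp only [zero_mul, map_zero]
    | tmul u v =>
        simp only [Algebra.TensorProduct.tmul_mul_tmul, mul_one, KH_tmul]
        rw [hm u]
    | add u' v' hu hv => simp only [add_mul, map_add, hu, hv]
  rw [etA_apply, etA_apply]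
  exact key (W.comul 1)

lemma n1aux (b c : A) (z : H) (s : H ⊗[k] H) :
    (b * c) ⊗ₜ[k] (etA k H W ((TensorProduct.lid k H)
        (rTensor H (W.counit ∘ₗ mulRight k z) s))) =
      lTensor A (etA k H W) (rTensor H (JA k H A W)
        ((TensorProduct.assoc k A H H).symm (b ⊗ₜ[k] s) * ((c ⊗ₜ[k] z) ⊗ₜ[k] (1:H)))) := by
  induction s using TensorProduct.induction_on with
  | zero => simp only [map_zero, TensorProduct.tmul_zero, zero_mul]
  | tmul y₁ y₂ =>
      simp only [LinearMap.rTensor_tmul, LinearMap.comp_apply, LinearMap.mulRight_apply,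
        TensorProduct.lid_tmul, map_smul, TensorProduct.tmul_smul,
        TensorProduct.assoc_symm_tmul, Algebra.TensorProduct.tmul_mul_tmul, mul_one,
        JA_tmul, LinearMap.lTensor_tmul, TensorProduct.smul_tmul']
  | add u' v' hu hv =>
      simp only [map_add, TensorProduct.tmul_add, add_mul, hu, hv]

lemma n1 (t t' : A ⊗[k] H) :
    lTensor A (etA k H W) (t * t') =
      lTensor A (etA k H W) (rTensor H (JA k H A W)
        ((TensorProduct.assoc k A H H).symm (lTensor A W.comul t) * (t' ⊗ₜ[k] (1:H)))) := by
  induction t using TensorProduct.induction_on with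
  | zero => simp only [zero_mul, map_zero]
  | tmul b y =>
      induction t' using TensorProduct.induction_on with
      | zero => simp only [mul_zero, TensorProduct.zero_tmul, map_zero]
      | tmul c z =>
          have hyz : etA k H W (y * z) = etA k H W ((TensorProduct.lid k H)
              (rTensor H (W.counit ∘ₗ mulRight k z) (W.comul y))) :=
            g0 k H W _ _ (fun u => g2 k H W u y z)
          rw [Algebra.TensorProduct.tmul_mul_tmul, LinearMap.lTensor_tmul,
            LinearMap.lTensor_tmul, hyz]
          exact n1aux k H A W b c z (W.comul y)
      | add c d hc hd =>
          simp only [mul_add, TensorProduct.add_tmul, add_mul, map_add, hc, hd]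
  | add u v hu hv => simp only [add_mul, map_add, hu, hv]

lemma n2 (t : A ⊗[k] H) (a : A) :
    rTensor H (JA k H A W) ((rTensor H R.rho t) * (R.rho a ⊗ₜ[k] (1:H))) =
      t * (a ⊗ₜ[k] (1:H)) := by
  induction t using TensorProduct.induction_on with
  | zero => simp only [map_zero, zero_mul]
  | tmul b y =>
      simp only [LinearMap.rTensor_tmul, Algebra.TensorProduct.tmul_mul_tmul,
        mul_one, JA_mulrho]
  | add u v hu hv => simp only [map_add, add_mul, hu, hv]

lemma n3 (t : A ⊗[k] H) (a : A) :
    lTensor A (etA k H W) (t * (a ⊗ₜ[k] (1:H))) =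
      (lTensor A (etA k H W) t) * (a ⊗ₜ[k] (1:H)) := by
  induction t using TensorProduct.induction_on with
  | zero => simp only [map_zero, zero_mul]
  | tmul b y =>
      simp only [Algebra.TensorProduct.tmul_mul_tmul, mul_one, LinearMap.lTensor_tmul]
  | add u v hu hv => simp only [map_add, add_mul, hu, hv]

lemma Nprime (a : A) :
    lTensor A (etA k H W) (R.rho a) = R.rho 1 * (a ⊗ₜ[k] (1:H)) := by
  conv_lhs => rw [rho_eq_r1_mul k H A W R a]
  rw [n1, X_eq, n2, n3, D2]

lemma b1a (g x : H) (w : H ⊗[k] H) :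
    W.counit (g * KH k H W (w * (x ⊗ₜ[k] (1:H)))) =
      LinearMap.mul' k k ((TensorProduct.map (W.counit ∘ₗ mulRight k x)
        (W.counit ∘ₗ mulLeft k g)) w) := by
  induction w using TensorProduct.induction_on with
  | zero => simp only [zero_mul, map_zero, mul_zero]
  | tmul u v =>
      simp only [Algebra.TensorProduct.tmul_mul_tmul, mul_one, KH_tmul,
        TensorProduct.map_tmul, LinearMap.comp_apply, LinearMap.mulRight_apply,
        LinearMap.mulLeft_apply, LinearMap.mul'_apply, mul_smul_comm, map_smul,
        smul_eq_mul]
  | add u v hu hv => simp only [add_mul, map_add, mul_add, hu, hv]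

lemma eps_et (g x : H) : W.counit (g * etA k H W x) = W.counit (g * x) := by
  rw [etA_apply, b1a, ← W.weak_counit_r g 1 x, mul_one]

lemma et_absorb (x : H) :
    (W.counit ∘ₗ mulLeft k x) ∘ₗ etA k H W = W.counit ∘ₗ mulLeft k x := by
  ext y
  simp only [LinearMap.comp_apply, LinearMap.mulLeft_apply]
  exact eps_et k H W x y

lemma p3b (x : H) (t : A ⊗[k] H) :
    JA k H A W (((1:A) ⊗ₜ[k] x) * t) =
      (TensorProduct.rid k A) (lTensor A (W.counit ∘ₗ mulLeft k x) t) := by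
  induction t using TensorProduct.induction_on with
  | zero => simp only [mul_zero, map_zero]
  | tmul c z =>
      simp only [Algebra.TensorProduct.tmul_mul_tmul, one_mul, JA_tmul,
        LinearMap.lTensor_tmul, LinearMap.comp_apply, LinearMap.mulLeft_apply,
        TensorProduct.rid_tmul]
  | add u v hu hv => simp only [mul_add, map_add, hu, hv]

lemma p3e (x : H) (t : A ⊗[k] H) :
    (TensorProduct.rid k A) (lTensor A (W.counit ∘ₗ mulLeft k x)
        (lTensor A (etA k H W) t)) =
      (TensorProduct.rid k A) (lTensor A (W.counit ∘ₗ mulLeft k x) t) := by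
  rw [← LinearMap.lTensor_comp_apply, et_absorb]

lemma part3_aux (f : H →ₗ[k] A) (x y : H) (t : A ⊗[k] H) :
    (TensorProduct.rid k A) (lTensor A (W.counit ∘ₗ mulLeft k x)
        (t * ((f y) ⊗ₜ[k] (1:H)))) =
      LinearMap.mul' k A ((TensorProduct.map LinearMap.id f)
        (lTensor A (KH k H W) (((1:A) ⊗ₜ[k] (x ⊗ₜ[k] y)) * lTensor A (rtH k H) t))) := by
  induction t using TensorProduct.induction_on with
  | zero => simp only [zero_mul, map_zero, mul_zero]
  | tmul c m =>
      simp only [Algebra.TensorProduct.tmul_mul_tmul, mul_one, one_mul,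
        LinearMap.lTensor_tmul, LinearMap.comp_apply, LinearMap.mulLeft_apply,
        TensorProduct.rid_tmul, rtH_apply, KH_tmul, TensorProduct.tmul_smul,
        map_smul, TensorProduct.map_tmul, LinearMap.mul'_apply, mul_smul_comm,
        LinearMap.id_coe, id_eq]
  | add u v hu hv => simp only [add_mul, map_add, mul_add, hu, hv]

lemma part3_key (f : H →ₗ[k] A) (z : H ⊗[k] H) :
    conv k H A W R f (epsTilde k H A W R) z =
      LinearMap.mul' k A ((TensorProduct.map LinearMap.id f)
        (lTensor A (KH k H W) (((1:A) ⊗ₜ[k] z) * lTensor A (rtH k H) (R.rho 1)))) := by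
  induction z using TensorProduct.induction_on with
  | zero => simp only [map_zero, TensorProduct.tmul_zero, zero_mul]
  | tmul x y =>
      rw [conv_tmul, mu_map_eps, mul_assoc, ← rho_eq_mul_r1, p3b, ← p3e, Nprime,
        part3_aux]
  | add u v hu hv =>
      simp only [map_add, TensorProduct.tmul_add, add_mul, hu, hv]

lemma part3 (f : H →ₗ[k] A) (hf : homCond k H A W R f) :
    prodH k H A W R f (epsTilde k H A W R) = f := by
  ext h
  rw [prodH_eq, part3_key, lemI]
  exact (hf h).symm

end Aux

/-- for a weak bialgebra `H` and a right `H`-comodule algebra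
`A`, the element `ε̃(h) = 1₍[0]₎ ε(h1₍[1]₎)` lies in `Hom̲(H,A)` and is a
two-sided unit for the product
`(f # g)(h) = f(h₍₂₎)₍[0]₎ g(h₍₁₎ f(h₍₂₎)₍[1]₎)` on `Hom̲(H,A)`. -/
theorem epsTilde_is_unit :
    homCond k H A W R (epsTilde k H A W R) ∧
    (∀ f : H →ₗ[k] A, homCond k H A W R f →
      prodH k H A W R (epsTilde k H A W R) f = f ∧
      prodH k H A W R f (epsTilde k H A W R) = f) := by
  exact ⟨homCond_eps k H A W R,
    fun f hf => ⟨part2 k H A W R f hf, part3 k H A W R f hf⟩⟩
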